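/- Let R be a ring, M a right R-module, W = End_R(M), and α an anti-endomorphism of W. (1) If λ ∈ W satisfies α(α(w))·λ = λ·w for all w ∈ W and α(λ)·λ is a unit of W, then the assignment x ⊗_α y ↦ y ⊗_α (λ x) extends to a well-defined anti-automorphism θ of the double R-module K_α, λ is a right θ-asymmetry of b_α, and if moreover α(λ)·λ = 1 then θ is an involution of K_α. (2) Conversely, if b_α is right regular and θ is an anti-automorphism (resp. an involution) of K_α, then there exists λ ∈ W with α(α(w))·λ = λ·w for all w ∈ W, with α(λ)·λ a unit of W (resp. α(λ)·λ = 1), and with θ(x ⊗_α y) = y ⊗_α (λ x) for all x, y ∈ M. -/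

import Mathlib

open MulOpposite TensorProduct Function

universe u v w v'

section Core

/-- An anti-endomorphism of a ring: additive, unital, reverses multiplication. -/
def IsAntiEndo {W : Type*} [Ring W] (α : W → W) : Prop :=
  (∀ u v : W, α (u + v) = α u + α v) ∧ α 1 = 1 ∧ ∀ u v : W, α (u * v) = α v * α u

/-- An anti-automorphism of a ring: a bijective anti-endomorphism. -/
def IsAntiAuto {W : Type*} [Ring W] (α : W → W) : Prop :=
  IsAntiEndo α ∧ Function.Bijective α

/-- An inner automorphism of a ring: conjugation by a unit. -/
def IsInnerAut {W : Type*} [Ring W] (φ : W → W) : Prop :=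
  ∃ u : Wˣ, ∀ w : W, φ w = ↑u * w * ↑u⁻¹

variable (R : Type u) [Ring R]

/-- A double `R`-module structure on the additive group `K`: two commuting
right `R`-module structures `m0` and `m1`. -/
structure DoubleModule (K : Type v) [AddCommGroup K] where
  m0 : K → R → K
  m1 : K → R → K
  m0_add_left : ∀ (k k' : K) (r : R), m0 (k + k') r = m0 k r + m0 k' r
  m0_add_right : ∀ (k : K) (r r' : R), m0 k (r + r') = m0 k r + m0 k r'
  m0_mul : ∀ (k : K) (r r' : R), m0 k (r * r') = m0 (m0 k r) r'
  m0_one : ∀ k : K, m0 k 1 = k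
  m1_add_left : ∀ (k k' : K) (r : R), m1 (k + k') r = m1 k r + m1 k' r
  m1_add_right : ∀ (k : K) (r r' : R), m1 k (r + r') = m1 k r + m1 k r'
  m1_mul : ∀ (k : K) (r r' : R), m1 k (r * r') = m1 (m1 k r) r'
  m1_one : ∀ k : K, m1 k 1 = k
  comm : ∀ (k : K) (a b : R), m1 (m0 k a) b = m0 (m1 k b) a

variable {R}

/-- A homomorphism of double `R`-modules. -/
def IsDoubleHom {K : Type v} {K' : Type w} [AddCommGroup K] [AddCommGroup K']
    (DK : DoubleModule R K) (DK' : DoubleModule R K') (f : K → K') : Prop :=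
  (∀ k k' : K, f (k + k') = f k + f k') ∧
  (∀ (k : K) (r : R), f (DK.m0 k r) = DK'.m0 (f k) r) ∧
  (∀ (k : K) (r : R), f (DK.m1 k r) = DK'.m1 (f k) r)

/-- An isomorphism of double `R`-modules. -/
def IsDoubleIso {K : Type v} {K' : Type w} [AddCommGroup K] [AddCommGroup K']
    (DK : DoubleModule R K) (DK' : DoubleModule R K') (f : K → K') : Prop :=
  IsDoubleHom DK DK' f ∧ Function.Bijective f

/-- An anti-automorphism of a double `R`-module: an additive bijection exchanging
the two module structures. -/
def IsDoubleAntiAuto {K : Type v} [AddCommGroup K] (DK : DoubleModule R K) (θ : K → K) : Prop :=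
  Function.Bijective θ ∧ (∀ k k' : K, θ (k + k') = θ k + θ k') ∧
  (∀ (k : K) (r : R), θ (DK.m0 k r) = DK.m1 (θ k) r) ∧
  (∀ (k : K) (r : R), θ (DK.m1 k r) = DK.m0 (θ k) r)

variable (R)

/-- A general bilinear form on a right `R`-module `M` (encoded as a module over `Rᵐᵒᵖ`)
with values in a double `R`-module `(K, DK)`. -/
structure GBF (M : Type v) [AddCommGroup M] [Module Rᵐᵒᵖ M]
    (K : Type w) [AddCommGroup K] (DK : DoubleModule R K) where
  b : M → M → K
  add_left : ∀ x x' y : M, b (x + x') y = b x y + b x' y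
  add_right : ∀ x y y' : M, b x (y + y') = b x y + b x y'
  smul_left : ∀ (x y : M) (r : R), b (op r • x) y = DK.m0 (b x y) r
  smul_right : ∀ (x y : M) (r : R), b x (op r • y) = DK.m1 (b x y) r

variable {R}

namespace GBF

variable {M : Type v} [AddCommGroup M] [Module Rᵐᵒᵖ M]
  {K : Type w} [AddCommGroup K] {DK : DoubleModule R K}

/-- The right adjoint of `β` is injective. -/
def RightInjective (β : GBF R M K DK) : Prop :=
  ∀ x x' : M, (∀ y : M, β.b y x = β.b y x') → x = x'

/-- The right adjoint of `β` is bijective onto `Hom_R(M, K₀)`. -/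
def RightRegular (β : GBF R M K DK) : Prop :=
  β.RightInjective ∧
  ∀ f : M → K, (∀ y y' : M, f (y + y') = f y + f y') →
    (∀ (y : M) (r : R), f (op r • y) = DK.m0 (f y) r) →
    ∃ x : M, ∀ y : M, f y = β.b y x

/-- The left adjoint of `β` is injective. -/
def LeftInjective (β : GBF R M K DK) : Prop :=
  ∀ x x' : M, (∀ y : M, β.b x y = β.b x' y) → x = x'

/-- The left adjoint of `β` is bijective onto `Hom_R(M, K₁)`. -/
def LeftRegular (β : GBF R M K DK) : Prop :=
  β.LeftInjective ∧
  ∀ f : M → K, (∀ y y' : M, f (y + y') = f y + f y') →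
    (∀ (y : M) (r : R), f (op r • y) = DK.m1 (f y) r) →
    ∃ x : M, ∀ y : M, f y = β.b x y

/-- `α` is an adjoint anti-endomorphism for `β`: `β(w x, y) = β(x, α(w) y)`. -/
def IsAdjoint (β : GBF R M K DK) (α : Module.End Rᵐᵒᵖ M → Module.End Rᵐᵒᵖ M) : Prop :=
  ∀ (w : Module.End Rᵐᵒᵖ M) (x y : M), β.b (w x) y = β.b x (α w y)

/-- Similarity of general bilinear forms on the same module. -/
def Similar {K' : Type v'} [AddCommGroup K'] {DK' : DoubleModule R K'}
    (β : GBF R M K DK) (β' : GBF R M K' DK') : Prop :=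
  ∃ f : K → K', IsDoubleIso DK DK' f ∧ ∀ x y : M, β'.b x y = f (β.b x y)

end GBF

section Kalpha

variable {M : Type v} [AddCommGroup M] [Module Rᵐᵒᵖ M]

/-- The subgroup of `M ⊗_ℤ M` generated by the elements `(w x) ⊗ y - x ⊗ (α w y)`. -/
def kalphaRel (α : Module.End Rᵐᵒᵖ M → Module.End Rᵐᵒᵖ M) : Submodule ℤ (M ⊗[ℤ] M) :=
  Submodule.span ℤ
    {z | ∃ (w : Module.End Rᵐᵒᵖ M) (x y : M), z = (w x) ⊗ₜ[ℤ] y - x ⊗ₜ[ℤ] (α w y)}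

/-- `K_α`, the quotient of `M ⊗_ℤ M` by the relations `(w x) ⊗ y = x ⊗ (α w y)`. -/
abbrev Kalpha (α : Module.End Rᵐᵒᵖ M → Module.End Rᵐᵒᵖ M) : Type _ :=
  (M ⊗[ℤ] M) ⧸ kalphaRel α

/-- The map `x ⊗ y ↦ (x·r) ⊗ y` on `M ⊗_ℤ M`. -/
noncomputable def smulLeftMap (r : R) : (M ⊗[ℤ] M) →ₗ[ℤ] (M ⊗[ℤ] M) :=
  TensorProduct.map ((DistribMulAction.toAddMonoidHom M (op r : Rᵐᵒᵖ)).toIntLinearMap)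
    LinearMap.id

/-- The map `x ⊗ y ↦ x ⊗ (y·r)` on `M ⊗_ℤ M`. -/
noncomputable def smulRightMap (r : R) : (M ⊗[ℤ] M) →ₗ[ℤ] (M ⊗[ℤ] M) :=
  TensorProduct.map LinearMap.id
    ((DistribMulAction.toAddMonoidHom M (op r : Rᵐᵒᵖ)).toIntLinearMap)

theorem smulLeftMap_tmul (r : R) (x y : M) :
    smulLeftMap (M := M) r (x ⊗ₜ[ℤ] y) = (op r • x) ⊗ₜ[ℤ] y := by
  erw [TensorProduct.map_tmul]; rfl

theorem smulRightMap_tmul (r : R) (x y : M) :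
    smulRightMap (M := M) r (x ⊗ₜ[ℤ] y) = x ⊗ₜ[ℤ] (op r • y) := by
  erw [TensorProduct.map_tmul]; rfl

theorem kalphaRel_le_left (α : Module.End Rᵐᵒᵖ M → Module.End Rᵐᵒᵖ M) (r : R) :
    kalphaRel α ≤ (kalphaRel α).comap (smulLeftMap (M := M) r) := by
  rw [kalphaRel, Submodule.span_le]
  rintro _ ⟨w, x, y, rfl⟩
  rw [SetLike.mem_coe, Submodule.mem_comap, map_sub]
  have h1 : smulLeftMap (M := M) r ((w x) ⊗ₜ[ℤ] y) = (w (op r • x)) ⊗ₜ[ℤ] y := by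
    simp [smulLeftMap_tmul, map_smul]
  have h2 : smulLeftMap (M := M) r (x ⊗ₜ[ℤ] (α w y)) = (op r • x) ⊗ₜ[ℤ] (α w y) := by
    simp [smulLeftMap_tmul]
  rw [h1, h2]
  exact Submodule.subset_span ⟨w, op r • x, y, rfl⟩

theorem kalphaRel_le_right (α : Module.End Rᵐᵒᵖ M → Module.End Rᵐᵒᵖ M) (r : R) :
    kalphaRel α ≤ (kalphaRel α).comap (smulRightMap (M := M) r) := by
  rw [kalphaRel, Submodule.span_le]
  rintro _ ⟨w, x, y, rfl⟩
  rw [SetLike.mem_coe, Submodule.mem_comap, map_sub]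
  have h1 : smulRightMap (M := M) r ((w x) ⊗ₜ[ℤ] y) = (w x) ⊗ₜ[ℤ] (op r • y) := by
    simp [smulRightMap_tmul]
  have h2 : smulRightMap (M := M) r (x ⊗ₜ[ℤ] (α w y)) = x ⊗ₜ[ℤ] (α w (op r • y)) := by
    simp [smulRightMap_tmul, map_smul]
  rw [h1, h2]
  exact Submodule.subset_span ⟨w, x, op r • y, rfl⟩

/-- The `m0`-action on `K_α`. -/
noncomputable def kSmul0 (α : Module.End Rᵐᵒᵖ M → Module.End Rᵐᵒᵖ M) (r : R) :
    Kalpha α →ₗ[ℤ] Kalpha α :=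
  Submodule.mapQ _ _ (smulLeftMap r) (kalphaRel_le_left α r)

/-- The `m1`-action on `K_α`. -/
noncomputable def kSmul1 (α : Module.End Rᵐᵒᵖ M → Module.End Rᵐᵒᵖ M) (r : R) :
    Kalpha α →ₗ[ℤ] Kalpha α :=
  Submodule.mapQ _ _ (smulRightMap r) (kalphaRel_le_right α r)

theorem kSmul0_mk (α : Module.End Rᵐᵒᵖ M → Module.End Rᵐᵒᵖ M) (r : R) (t : M ⊗[ℤ] M) :
    kSmul0 α r (Submodule.Quotient.mk t) = Submodule.Quotient.mk (smulLeftMap r t) := rfl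

theorem kSmul1_mk (α : Module.End Rᵐᵒᵖ M → Module.End Rᵐᵒᵖ M) (r : R) (t : M ⊗[ℤ] M) :
    kSmul1 α r (Submodule.Quotient.mk t) = Submodule.Quotient.mk (smulRightMap r t) := rfl

/-- The double `R`-module structure on `K_α`. -/
noncomputable def KalphaDM (α : Module.End Rᵐᵒᵖ M → Module.End Rᵐᵒᵖ M) :
    DoubleModule R (Kalpha α) where
  m0 k r := kSmul0 α r k
  m1 k r := kSmul1 α r k
  m0_add_left k k' r := map_add _ k k'
  m0_add_right := by
    intro k r r'
    try dsimp only
    induction k using Submodule.Quotient.induction_on with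
    | _ t =>
      rw [kSmul0_mk, kSmul0_mk, kSmul0_mk, ← Submodule.Quotient.mk_add]
      congr 1
      induction t with
      | zero => simp
      | tmul x y => simp [smulLeftMap_tmul, op_add, add_smul, TensorProduct.add_tmul]
      | add a b ha hb => rw [map_add, map_add, map_add, ha, hb]; abel
  m0_mul := by
    intro k r r'
    try dsimp only
    induction k using Submodule.Quotient.induction_on with
    | _ t =>
      rw [kSmul0_mk, kSmul0_mk, kSmul0_mk]
      congr 1
      induction t with
      | zero => simp
      | tmul x y => simp [smulLeftMap_tmul, op_mul, mul_smul]
      | add a b ha hb => rw [map_add, map_add, map_add, ha, hb]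
  m0_one := by
    intro k
    try dsimp only
    induction k using Submodule.Quotient.induction_on with
    | _ t =>
      rw [kSmul0_mk]
      congr 1
      induction t with
      | zero => simp
      | tmul x y => simp [smulLeftMap_tmul]
      | add a b ha hb => rw [map_add, ha, hb]
  m1_add_left k k' r := map_add _ k k'
  m1_add_right := by
    intro k r r'
    try dsimp only
    induction k using Submodule.Quotient.induction_on with
    | _ t =>
      rw [kSmul1_mk, kSmul1_mk, kSmul1_mk, ← Submodule.Quotient.mk_add]
      congr 1
      induction t with
      | zero => simp
      | tmul x y => simp [smulRightMap_tmul, op_add, add_smul, TensorProduct.tmul_add]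
      | add a b ha hb => rw [map_add, map_add, map_add, ha, hb]; abel
  m1_mul := by
    intro k r r'
    try dsimp only
    induction k using Submodule.Quotient.induction_on with
    | _ t =>
      rw [kSmul1_mk, kSmul1_mk, kSmul1_mk]
      congr 1
      induction t with
      | zero => simp
      | tmul x y => simp [smulRightMap_tmul, op_mul, mul_smul]
      | add a b ha hb => rw [map_add, map_add, map_add, ha, hb]
  m1_one := by
    intro k
    try dsimp only
    induction k using Submodule.Quotient.induction_on with
    | _ t =>
      rw [kSmul1_mk]
      congr 1
      induction t with
      | zero => simp
      | tmul x y => simp [smulRightMap_tmul]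
      | add a b ha hb => rw [map_add, ha, hb]
  comm := by
    intro k a c
    try dsimp only
    induction k using Submodule.Quotient.induction_on with
    | _ t =>
      rw [kSmul0_mk, kSmul1_mk, kSmul1_mk, kSmul0_mk]
      congr 1
      induction t with
      | zero => simp
      | tmul x y => simp [smulLeftMap_tmul, smulRightMap_tmul]
      | add p q hp hq => rw [map_add, map_add, map_add, map_add, hp, hq]

/-- The universal general bilinear form `b_α : M × M → K_α`. -/
noncomputable def balpha (α : Module.End Rᵐᵒᵖ M → Module.End Rᵐᵒᵖ M) :
    GBF R M (Kalpha α) (KalphaDM α) where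
  b x y := Submodule.Quotient.mk (x ⊗ₜ[ℤ] y)
  add_left x x' y := by
    try dsimp only
    rw [TensorProduct.add_tmul, Submodule.Quotient.mk_add]
  add_right x y y' := by
    try dsimp only
    rw [TensorProduct.tmul_add, Submodule.Quotient.mk_add]
  smul_left x y r := by
    show _ = kSmul0 α r (Submodule.Quotient.mk (x ⊗ₜ[ℤ] y))
    rw [kSmul0_mk]
    congr 1
  smul_right x y r := by
    show _ = kSmul1 α r (Submodule.Quotient.mk (x ⊗ₜ[ℤ] y))
    rw [kSmul1_mk]
    congr 1

end Kalpha

end Core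

section Stmt4Aux

variable {R : Type u} [Ring R] {M : Type v} [AddCommGroup M] [Module Rᵐᵒᵖ M]
variable (α : Module.End Rᵐᵒᵖ M → Module.End Rᵐᵒᵖ M)

theorem stmt4_rel_mem (w : Module.End Rᵐᵒᵖ M) (x y : M) :
    (w x) ⊗ₜ[ℤ] y - x ⊗ₜ[ℤ] (α w y) ∈ kalphaRel α :=
  Submodule.subset_span ⟨w, x, y, rfl⟩

theorem stmt4_mk_rel (w : Module.End Rᵐᵒᵖ M) (x y : M) :
    (Submodule.Quotient.mk ((w x) ⊗ₜ[ℤ] y) : Kalpha α)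
      = Submodule.Quotient.mk (x ⊗ₜ[ℤ] (α w y)) :=
  (Submodule.Quotient.eq _).2 (stmt4_rel_mem α w x y)

/-- The tensor-level map `x ⊗ y ↦ y ⊗ (lam x)`. -/
noncomputable def stmt4_T (lam : Module.End Rᵐᵒᵖ M) : (M ⊗[ℤ] M) →ₗ[ℤ] (M ⊗[ℤ] M) :=
  (TensorProduct.comm ℤ M M).toLinearMap ∘ₗ
    TensorProduct.map lam.toAddMonoidHom.toIntLinearMap LinearMap.id

@[simp] theorem stmt4_T_tmul (lam : Module.End Rᵐᵒᵖ M) (x y : M) :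
    stmt4_T lam (x ⊗ₜ[ℤ] y) = y ⊗ₜ[ℤ] (lam x) := rfl

/-- The tensor-level map `x ⊗ y ↦ x ⊗ (v y)`. -/
noncomputable def stmt4_Rho (v : Module.End Rᵐᵒᵖ M) : (M ⊗[ℤ] M) →ₗ[ℤ] (M ⊗[ℤ] M) :=
  TensorProduct.map LinearMap.id v.toAddMonoidHom.toIntLinearMap

@[simp] theorem stmt4_Rho_tmul (v : Module.End Rᵐᵒᵖ M) (x y : M) :
    stmt4_Rho v (x ⊗ₜ[ℤ] y) = x ⊗ₜ[ℤ] (v y) := rfl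

theorem stmt4_T_le (lam : Module.End Rᵐᵒᵖ M)
    (hcomm : ∀ w : Module.End Rᵐᵒᵖ M, α (α w) * lam = lam * w) :
    kalphaRel α ≤ (kalphaRel α).comap (stmt4_T (M := M) lam) := by
  rw [kalphaRel, Submodule.span_le]
  rintro _ ⟨w, x, y, rfl⟩
  rw [SetLike.mem_coe, Submodule.mem_comap, map_sub, stmt4_T_tmul, stmt4_T_tmul]
  have h : lam (w x) = α (α w) (lam x) := by
    have := congrArg (fun f : Module.End Rᵐᵒᵖ M => f x) (hcomm w)
    simpa [Module.End.mul_apply] using this.symm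
  rw [h]
  have := Submodule.neg_mem _ (stmt4_rel_mem α (α w) y (lam x))
  rw [neg_sub] at this; exact this

theorem stmt4_Rho_le (v : Module.End Rᵐᵒᵖ M)
    (hv : ∀ w : Module.End Rᵐᵒᵖ M, α w * v = v * α w) :
    kalphaRel α ≤ (kalphaRel α).comap (stmt4_Rho (M := M) v) := by
  rw [kalphaRel, Submodule.span_le]
  rintro _ ⟨w, x, y, rfl⟩
  rw [SetLike.mem_coe, Submodule.mem_comap, map_sub, stmt4_Rho_tmul, stmt4_Rho_tmul]
  have h : v (α w y) = α w (v y) := by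
    have := congrArg (fun f : Module.End Rᵐᵒᵖ M => f y) (hv w)
    simpa [Module.End.mul_apply] using this.symm
  rw [h]
  exact stmt4_rel_mem α w x (v y)

theorem stmt4_u_comm (hα : IsAntiEndo α) (lam : Module.End Rᵐᵒᵖ M)
    (hcomm : ∀ w : Module.End Rᵐᵒᵖ M, α (α w) * lam = lam * w)
    (w : Module.End Rᵐᵒᵖ M) : (α lam * lam) * α w = α w * (α lam * lam) := by
  calc (α lam * lam) * α w = α lam * (lam * α w) := by rw [mul_assoc]
    _ = α lam * (α (α (α w)) * lam) := by rw [hcomm (α w)]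
    _ = (α lam * α (α (α w))) * lam := by rw [mul_assoc]
    _ = α (α (α w) * lam) * lam := by rw [hα.2.2]
    _ = α (lam * w) * lam := by rw [hcomm w]
    _ = (α w * α lam) * lam := by rw [hα.2.2]
    _ = α w * (α lam * lam) := by rw [mul_assoc]

theorem stmt4_exists_lam (hreg : (balpha (M := M) α).RightRegular)
    (θ : Kalpha (M := M) α → Kalpha (M := M) α)
    (hadd : ∀ k k', θ (k + k') = θ k + θ k')
    (hm0 : ∀ (k) (r : R), θ ((KalphaDM α).m0 k r) = (KalphaDM α).m1 (θ k) r)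
    (hm1 : ∀ (k) (r : R), θ ((KalphaDM α).m1 k r) = (KalphaDM α).m0 (θ k) r) :
    ∃ lam : Module.End Rᵐᵒᵖ M,
      ∀ x y : M, θ ((balpha α).b x y) = (balpha α).b y (lam x) := by
  have hex : ∀ x : M, ∃ z : M, ∀ y : M, θ ((balpha α).b x y) = (balpha α).b y z := by
    intro x
    apply hreg.2 (fun y => θ ((balpha α).b x y))
    · intro y y'
      rw [(balpha α).add_right, hadd]
    · intro y r
      rw [(balpha α).smul_right, hm1]
  choose g hg using hex
  refine ⟨{ toFun := g, map_add' := ?_, map_smul' := ?_ }, fun x y => hg x y⟩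
  · intro x x'
    apply hreg.1
    intro y
    calc (balpha α).b y (g (x + x')) = θ ((balpha α).b (x + x') y) := (hg _ y).symm
      _ = θ ((balpha α).b x y + (balpha α).b x' y) := by rw [(balpha α).add_left]
      _ = (balpha α).b y (g x) + (balpha α).b y (g x') := by rw [hadd, hg, hg]
      _ = (balpha α).b y (g x + g x') := ((balpha α).add_right _ _ _).symm
  · intro c x
    simp only [RingHom.id_apply]
    apply hreg.1
    intro y
    calc (balpha α).b y (g (c • x)) = θ ((balpha α).b (c • x) y) := (hg _ y).symm
      _ = θ ((balpha α).b (op c.unop • x) y) := by rw [op_unop]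
      _ = θ ((KalphaDM α).m0 ((balpha α).b x y) c.unop) := by rw [(balpha α).smul_left]
      _ = (KalphaDM α).m1 (θ ((balpha α).b x y)) c.unop := hm0 _ _
      _ = (KalphaDM α).m1 ((balpha α).b y (g x)) c.unop := by rw [hg]
      _ = (balpha α).b y (op c.unop • g x) := ((balpha α).smul_right _ _ _).symm
      _ = (balpha α).b y (c • g x) := by rw [op_unop]

theorem stmt4_lam_comm (hreg : (balpha (M := M) α).RightRegular)
    (θ : Kalpha (M := M) α → Kalpha (M := M) α) (lam : Module.End Rᵐᵒᵖ M)
    (hf : ∀ x y : M, θ ((balpha α).b x y) = (balpha α).b y (lam x))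
    (w : Module.End Rᵐᵒᵖ M) : α (α w) * lam = lam * w := by
  apply LinearMap.ext
  intro x
  rw [Module.End.mul_apply, Module.End.mul_apply]
  apply hreg.1
  intro y
  calc (balpha α).b y ((α (α w)) (lam x))
      = Submodule.Quotient.mk (y ⊗ₜ[ℤ] ((α (α w)) (lam x))) := rfl
    _ = Submodule.Quotient.mk (((α w) y) ⊗ₜ[ℤ] (lam x)) := (stmt4_mk_rel α (α w) y (lam x)).symm
    _ = θ ((balpha α).b x ((α w) y)) := (hf x ((α w) y)).symm
    _ = θ (Submodule.Quotient.mk (x ⊗ₜ[ℤ] ((α w) y))) := rfl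
    _ = θ (Submodule.Quotient.mk ((w x) ⊗ₜ[ℤ] y)) := by rw [stmt4_mk_rel α w x y]
    _ = (balpha α).b y (lam (w x)) := hf (w x) y

theorem stmt4_theta_sq (θ : Kalpha (M := M) α → Kalpha (M := M) α)
    (lam : Module.End Rᵐᵒᵖ M)
    (hf : ∀ x y : M, θ ((balpha α).b x y) = (balpha α).b y (lam x)) (x y : M) :
    θ (θ ((balpha α).b x y)) = (balpha α).b x ((α lam * lam) y) := by
  rw [hf x y, hf y (lam x)]
  show (Submodule.Quotient.mk ((lam x) ⊗ₜ[ℤ] (lam y)) : Kalpha α)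
      = Submodule.Quotient.mk (x ⊗ₜ[ℤ] ((α lam * lam) y))
  rw [Module.End.mul_apply]
  exact stmt4_mk_rel α lam x (lam y)

end Stmt4Aux

/-- Elements `λ ∈ W` with `α(α(w))λ = λw` and `α(λ)λ` a unit induce
anti-automorphisms `x ⊗ y ↦ y ⊗ λx` of `K_α` (involutions when `α(λ)λ = 1`), with `λ`
a right `θ`-asymmetry of `b_α`; conversely, when `b_α` is right regular every
anti-automorphism (resp. involution) of `K_α` arises this way. -/
theorem stmt_4 {R : Type u} [Ring R] {M : Type v} [AddCommGroup M] [Module Rᵐᵒᵖ M]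
    (α : Module.End Rᵐᵒᵖ M → Module.End Rᵐᵒᵖ M) (hα : IsAntiEndo α) :
    (∀ lam : Module.End Rᵐᵒᵖ M,
      (∀ w : Module.End Rᵐᵒᵖ M, α (α w) * lam = lam * w) → IsUnit (α lam * lam) →
      ∃ θ : Kalpha (M := M) α → Kalpha (M := M) α,
        IsDoubleAntiAuto (KalphaDM α) θ ∧
        (∀ x y : M, θ ((balpha α).b x y) = (balpha α).b y (lam x)) ∧
        (α lam * lam = 1 → ∀ k, θ (θ k) = k)) ∧
    ((balpha (M := M) α).RightRegular →
      (∀ θ : Kalpha (M := M) α → Kalpha (M := M) α, IsDoubleAntiAuto (KalphaDM α) θ →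
        ∃ lam : Module.End Rᵐᵒᵖ M,
          (∀ w : Module.End Rᵐᵒᵖ M, α (α w) * lam = lam * w) ∧ IsUnit (α lam * lam) ∧
          ∀ x y : M, θ ((balpha α).b x y) = (balpha α).b y (lam x)) ∧
      (∀ θ : Kalpha (M := M) α → Kalpha (M := M) α, IsDoubleAntiAuto (KalphaDM α) θ →
        (∀ k, θ (θ k) = k) →
        ∃ lam : Module.End Rᵐᵒᵖ M,
          (∀ w : Module.End Rᵐᵒᵖ M, α (α w) * lam = lam * w) ∧ α lam * lam = 1 ∧
          ∀ x y : M, θ ((balpha α).b x y) = (balpha α).b y (lam x))) := by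
  constructor
  · -- Part 1
    intro lam hcomm hunit
    obtain ⟨U, hU⟩ := hunit
    have huv : (α lam * lam) * (↑U⁻¹ : Module.End Rᵐᵒᵖ M) = 1 := by
      rw [← hU]; exact U.mul_inv
    have hvu : (↑U⁻¹ : Module.End Rᵐᵒᵖ M) * (α lam * lam) = 1 := by
      rw [← hU]; exact U.inv_mul
    have hucomm := stmt4_u_comm α hα lam hcomm
    have hvcomm : ∀ w : Module.End Rᵐᵒᵖ M,
        α w * (↑U⁻¹ : Module.End Rᵐᵒᵖ M) = (↑U⁻¹ : Module.End Rᵐᵒᵖ M) * α w := by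
      intro w
      calc α w * ↑U⁻¹ = ((↑U⁻¹ : Module.End Rᵐᵒᵖ M) * (α lam * lam)) * α w * ↑U⁻¹ := by
            rw [hvu, one_mul]
        _ = ↑U⁻¹ * ((α lam * lam) * α w) * ↑U⁻¹ := by rw [mul_assoc (↑U⁻¹ : Module.End Rᵐᵒᵖ M)]
        _ = ↑U⁻¹ * (α w * (α lam * lam)) * ↑U⁻¹ := by rw [hucomm w]
        _ = ↑U⁻¹ * α w * ((α lam * lam) * ↑U⁻¹) := by
            rw [← mul_assoc (↑U⁻¹ : Module.End Rᵐᵒᵖ M), mul_assoc (↑U⁻¹ * α w)]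
        _ = ↑U⁻¹ * α w := by rw [huv, mul_one]
    set v : Module.End Rᵐᵒᵖ M := (↑U⁻¹ : Module.End Rᵐᵒᵖ M) with hv
    set θL := Submodule.mapQ _ _ (stmt4_T (M := M) lam) (stmt4_T_le α lam hcomm) with hθL
    set ρ := Submodule.mapQ _ _ (stmt4_Rho (M := M) v) (stmt4_Rho_le α v hvcomm) with hρ
    have hθmk : ∀ t : M ⊗[ℤ] M,
        θL (Submodule.Quotient.mk t) = Submodule.Quotient.mk (stmt4_T lam t) := fun t => rfl
    have hρmk : ∀ t : M ⊗[ℤ] M,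
        ρ (Submodule.Quotient.mk t) = Submodule.Quotient.mk (stmt4_Rho v t) := fun t => rfl
    have hθb : ∀ x y : M, θL ((balpha α).b x y) = (balpha α).b y (lam x) := by
      intro x y
      show θL (Submodule.Quotient.mk (x ⊗ₜ[ℤ] y)) = _
      rw [hθmk, stmt4_T_tmul]
      rfl
    have hθθ : ∀ x y : M, θL (θL ((balpha α).b x y)) = (balpha α).b x ((α lam * lam) y) :=
      stmt4_theta_sq α θL lam hθb
    have hid1 : ∀ k, θL (θL (ρ k)) = k := by
      intro k
      induction k using Submodule.Quotient.induction_on with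
      | _ t =>
        induction t with
        | zero =>
          rw [show (Submodule.Quotient.mk (0 : M ⊗[ℤ] M) : Kalpha α) = 0 from rfl]
          rw [map_zero, map_zero, map_zero]
        | tmul x y =>
          rw [hρmk, stmt4_Rho_tmul]
          rw [show (Submodule.Quotient.mk (x ⊗ₜ[ℤ] (v y)) : Kalpha α)
              = (balpha α).b x (v y) from rfl]
          rw [hθθ x (v y), ← Module.End.mul_apply, huv]
          rfl
        | add a b ha hb =>
          rw [Submodule.Quotient.mk_add, map_add, map_add, map_add, ha, hb]
    have hid2 : ∀ k, ρ (θL (θL k)) = k := by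
      intro k
      induction k using Submodule.Quotient.induction_on with
      | _ t =>
        induction t with
        | zero =>
          rw [show (Submodule.Quotient.mk (0 : M ⊗[ℤ] M) : Kalpha α) = 0 from rfl]
          rw [map_zero, map_zero, map_zero]
        | tmul x y =>
          rw [show (Submodule.Quotient.mk (x ⊗ₜ[ℤ] y) : Kalpha α)
              = (balpha α).b x y from rfl]
          rw [hθθ x y]
          rw [show (balpha α).b x ((α lam * lam) y)
              = Submodule.Quotient.mk (x ⊗ₜ[ℤ] ((α lam * lam) y)) from rfl]
          rw [hρmk, stmt4_Rho_tmul, ← Module.End.mul_apply, hvu]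
          rfl
        | add a b ha hb =>
          rw [Submodule.Quotient.mk_add, map_add, map_add, map_add, ha, hb]
    refine ⟨θL, ⟨⟨?_, ?_⟩, fun k k' => map_add θL k k', ?_, ?_⟩, hθb, ?_⟩
    · -- injective
      intro a b h
      rw [← hid2 a, ← hid2 b, h]
    · -- surjective
      exact fun k => ⟨θL (ρ k), hid1 k⟩
    · -- m0
      intro k r
      induction k using Submodule.Quotient.induction_on with
      | _ t =>
        show θL (kSmul0 α r (Submodule.Quotient.mk t))
            = kSmul1 α r (θL (Submodule.Quotient.mk t))
        rw [kSmul0_mk, hθmk, hθmk, kSmul1_mk]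
        congr 1
        induction t with
        | zero => simp
        | tmul x y =>
          simp [smulLeftMap_tmul, smulRightMap_tmul, stmt4_T_tmul, map_smul]
        | add a b ha hb =>
          rw [map_add, map_add, map_add, map_add, ha, hb]
    · -- m1
      intro k r
      induction k using Submodule.Quotient.induction_on with
      | _ t =>
        show θL (kSmul1 α r (Submodule.Quotient.mk t))
            = kSmul0 α r (θL (Submodule.Quotient.mk t))
        rw [kSmul1_mk, hθmk, hθmk, kSmul0_mk]
        congr 1
        induction t with
        | zero => simp
        | tmul x y =>
          simp [smulLeftMap_tmul, smulRightMap_tmul, stmt4_T_tmul, map_smul]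
        | add a b ha hb =>
          rw [map_add, map_add, map_add, map_add, ha, hb]
    · -- involution
      intro h1 k
      induction k using Submodule.Quotient.induction_on with
      | _ t =>
        induction t with
        | zero =>
          rw [show (Submodule.Quotient.mk (0 : M ⊗[ℤ] M) : Kalpha α) = 0 from rfl]
          rw [map_zero, map_zero]
        | tmul x y =>
          rw [show (Submodule.Quotient.mk (x ⊗ₜ[ℤ] y) : Kalpha α)
              = (balpha α).b x y from rfl]
          rw [hθθ x y, h1]
          rfl
        | add a b ha hb =>
          rw [Submodule.Quotient.mk_add, map_add, map_add, ha, hb]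
  · -- Part 2
    intro hreg
    have mkinv : ∀ (θ : Kalpha (M := M) α → Kalpha (M := M) α),
        IsDoubleAntiAuto (KalphaDM α) θ →
        ∃ lam : Module.End Rᵐᵒᵖ M,
          (∀ w : Module.End Rᵐᵒᵖ M, α (α w) * lam = lam * w) ∧
          ∀ x y : M, θ ((balpha α).b x y) = (balpha α).b y (lam x) := by
      intro θ hθ
      obtain ⟨lam, hf⟩ := stmt4_exists_lam α hreg θ hθ.2.1 hθ.2.2.1 hθ.2.2.2
      exact ⟨lam, stmt4_lam_comm α hreg θ lam hf, hf⟩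
    constructor
    · -- anti-automorphism case
      intro θ hθ
      obtain ⟨lam, hcomm, hf⟩ := mkinv θ hθ
      obtain ⟨θi, hli, hri⟩ := Function.bijective_iff_has_inverse.mp hθ.1
      have haddi : ∀ k k', θi (k + k') = θi k + θi k' := by
        intro k k'
        conv_lhs => rw [← hri k, ← hri k', ← hθ.2.1, hli]
      have hm0i : ∀ (k) (r : R), θi ((KalphaDM α).m0 k r) = (KalphaDM α).m1 (θi k) r := by
        intro k r
        conv_lhs => rw [← hri k, ← hθ.2.2.2 (θi k) r, hli]
      have hm1i : ∀ (k) (r : R), θi ((KalphaDM α).m1 k r) = (KalphaDM α).m0 (θi k) r := by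
        intro k r
        conv_lhs => rw [← hri k, ← hθ.2.2.1 (θi k) r, hli]
      obtain ⟨lam', hf'⟩ := stmt4_exists_lam α hreg θi haddi hm0i hm1i
      refine ⟨lam, hcomm, ?_, hf⟩
      have huv : (α lam * lam) * (α lam' * lam') = 1 := by
        apply LinearMap.ext
        intro y
        rw [Module.End.one_apply]
        apply hreg.1
        intro x
        calc (balpha α).b x (((α lam * lam) * (α lam' * lam')) y)
            = (balpha α).b x ((α lam * lam) ((α lam' * lam') y)) := by
              rw [Module.End.mul_apply]
          _ = θ (θ ((balpha α).b x ((α lam' * lam') y))) :=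
              (stmt4_theta_sq α θ lam hf x ((α lam' * lam') y)).symm
          _ = θ (θ (θi (θi ((balpha α).b x y)))) := by
              rw [stmt4_theta_sq α θi lam' hf' x y]
          _ = (balpha α).b x y := by rw [hri, hri]
      have hvu : (α lam' * lam') * (α lam * lam) = 1 := by
        apply LinearMap.ext
        intro y
        rw [Module.End.one_apply]
        apply hreg.1
        intro x
        calc (balpha α).b x (((α lam' * lam') * (α lam * lam)) y)
            = (balpha α).b x ((α lam' * lam') ((α lam * lam) y)) := by
              rw [Module.End.mul_apply]
          _ = θi (θi ((balpha α).b x ((α lam * lam) y))) :=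
              (stmt4_theta_sq α θi lam' hf' x ((α lam * lam) y)).symm
          _ = θi (θi (θ (θ ((balpha α).b x y)))) := by
              rw [stmt4_theta_sq α θ lam hf x y]
          _ = (balpha α).b x y := by rw [hli, hli]
      exact ⟨⟨_, _, huv, hvu⟩, rfl⟩
    · -- involution case
      intro θ hθ hinv
      obtain ⟨lam, hcomm, hf⟩ := mkinv θ hθ
      refine ⟨lam, hcomm, ?_, hf⟩
      apply LinearMap.ext
      intro y
      rw [Module.End.one_apply]
      apply hreg.1
      intro x
      rw [← stmt4_theta_sq α θ lam hf x y, hinv]
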